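/- Let S be the zero-union of finite semigroups S₁, …, Sₙ with at least two non-commutative factors. Then the commuting graph of S contains a left path if and only if there exists a non-commutative Sᵢ and distinct non-central x, y ∈ Sᵢ with x² = yx and y² = xy; in this case the knit degree of S is 1 or 2, and it equals 1 if and only if some G(Sᵢ) contains a left path of length 1. -/

import Mathlib

open SimpleGraph

/-- The center of a magma/semigroup: elements commuting with everything. -/
def sgCenter (S : Type*) [Mul S] : Set S := {x | ∀ y, x * y = y * x}

/-- The commuting graph of a semigroup: vertices are non-central elements,
distinct vertices adjacent iff they commute. -/
def commGraph (S : Type*) [Mul S] : SimpleGraph {x : S // x ∉ sgCenter S} where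
  Adj x y := x ≠ y ∧ (x : S) * y = (y : S) * x
  symm := ⟨fun x y ⟨h, h'⟩ => ⟨h.symm, h'.symm⟩⟩
  loopless := ⟨fun x ⟨h, _⟩ => h rfl⟩

/-- The extended commuting graph of a semigroup: vertices are all elements,
distinct vertices adjacent iff they commute. -/
def extCommGraph (S : Type*) [Mul S] : SimpleGraph S where
  Adj x y := x ≠ y ∧ x * y = y * x
  symm := ⟨fun x y ⟨h, h'⟩ => ⟨h.symm, h'.symm⟩⟩
  loopless := ⟨fun x ⟨h, _⟩ => h rfl⟩

/-- The graph join of two graphs on disjoint vertex sets. -/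
def graphJoin {V W : Type*} (G : SimpleGraph V) (H : SimpleGraph W) :
    SimpleGraph (V ⊕ W) where
  Adj x y := match x, y with
    | .inl a, .inl b => G.Adj a b
    | .inr a, .inr b => H.Adj a b
    | .inl _, .inr _ => True
    | .inr _, .inl _ => True
  symm := by constructor; rintro (a|a) (b|b) h <;> simp_all [SimpleGraph.Adj.symm]
  loopless := by constructor; rintro (a|a) h; exacts [G.loopless.irrefl a h, H.loopless.irrefl a h]

/-- The graph join of a family of graphs on disjoint vertex sets. -/
def graphJoinFam {ι : Type*} {V : ι → Type*} (G : ∀ i, SimpleGraph (V i)) :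
    SimpleGraph (Σ i, V i) where
  Adj x y := x.1 ≠ y.1 ∨ ∃ a b : V x.1, (G x.1).Adj a b ∧ x = ⟨x.1, a⟩ ∧ y = ⟨x.1, b⟩
  symm := by
    constructor
    rintro ⟨i, a⟩ ⟨j, b⟩ (h | ⟨a', b', hadj, h1, h2⟩)
    · exact Or.inl h.symm
    · cases h1; cases h2
      exact Or.inr ⟨b', a, hadj.symm, rfl, rfl⟩
  loopless := by
    constructor
    rintro ⟨i, a⟩ (h | ⟨a', b', hadj, h1, h2⟩)
    · exact h rfl
    · cases h1
      cases h2
      exact (G i).loopless.irrefl _ hadj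

/-- The strong product of two simple graphs. -/
def strongProd {V W : Type*} (G : SimpleGraph V) (H : SimpleGraph W) :
    SimpleGraph (V × W) where
  Adj x y := x ≠ y ∧ (x.1 = y.1 ∨ G.Adj x.1 y.1) ∧ (x.2 = y.2 ∨ H.Adj x.2 y.2)
  symm := ⟨fun x y ⟨h, h1, h2⟩ =>
    ⟨h.symm, h1.imp Eq.symm (fun h => G.symm.symm _ _ h), h2.imp Eq.symm (fun h => H.symm.symm _ _ h)⟩⟩
  loopless := ⟨fun x ⟨h, _⟩ => h rfl⟩

/-- The strong product of a family of simple graphs. -/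
def strongProdFam {ι : Type*} {V : ι → Type*} (G : ∀ i, SimpleGraph (V i)) :
    SimpleGraph (∀ i, V i) where
  Adj x y := x ≠ y ∧ ∀ i, x i = y i ∨ (G i).Adj (x i) (y i)
  symm := ⟨fun x y ⟨h, h'⟩ => ⟨h.symm, fun i => (h' i).imp Eq.symm (fun h => (G i).symm.symm _ _ h)⟩⟩
  loopless := ⟨fun x ⟨h, _⟩ => h rfl⟩

/-- `p` is a left path in the commuting graph of `S`. -/
def IsLeftPath {S : Type*} [Mul S] {u v : {x : S // x ∉ sgCenter S}}
    (p : (commGraph S).Walk u v) : Prop :=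
  p.IsPath ∧ u ≠ v ∧ ∀ w ∈ p.support, (u : S) * (w : S) = (v : S) * (w : S)

/-- The commuting graph of `S` contains a left path. -/
def HasLeftPath (S : Type*) [Mul S] : Prop :=
  ∃ (u v : {x : S // x ∉ sgCenter S}) (p : (commGraph S).Walk u v), IsLeftPath p

/-- The knit degree of `S`: the length of a shortest left path in its commuting graph. -/
noncomputable def knitDegree (S : Type*) [Mul S] : ℕ :=
  sInf {m | ∃ (u v : {x : S // x ∉ sgCenter S}) (p : (commGraph S).Walk u v),
    IsLeftPath p ∧ p.length = m}

/-- `p` is a *-left path in the extended commuting graph of `S`. -/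
def IsStarLeftPath {S : Type*} [Mul S] {u v : S}
    (p : (extCommGraph S).Walk u v) : Prop :=
  p.IsPath ∧ u ≠ v ∧ ∀ w ∈ p.support, u * w = v * w

/-- The extended commuting graph of `S` contains a *-left path. -/
def HasStarLeftPath (S : Type*) [Mul S] : Prop :=
  ∃ (u v : S) (p : (extCommGraph S).Walk u v), IsStarLeftPath p

/-- The *-knit degree of `S`. -/
noncomputable def starKnitDegree (S : Type*) [Mul S] : ℕ :=
  sInf {m | ∃ (u v : S) (p : (extCommGraph S).Walk u v), IsStarLeftPath p ∧ p.length = m}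

/-- The zero-union of a family of semigroups: their disjoint union plus a new zero. -/
def ZeroUnion {n : ℕ} (S : Fin n → Type*) : Type _ := Option (Σ i, S i)

instance {n : ℕ} (S : Fin n → Type*) [∀ i, Mul (S i)] : Mul (ZeroUnion S) where
  mul x y := match x, y with
    | some ⟨i, a⟩, some ⟨j, b⟩ =>
      if h : j = i then some ⟨i, a * (h ▸ b)⟩ else none
    | _, _ => none


section Helpers
variable {n : ℕ} {S : Fin n → Type*} [∀ i, Mul (S i)]

def zuSome (i : Fin n) (a : S i) : ZeroUnion S :=
  (some ⟨i, a⟩ : Option (Σ i, S i))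

def zuZero : ZeroUnion S := (none : Option (Σ i, S i))

lemma zu_cases (x : ZeroUnion S) : x = zuZero ∨ ∃ i a, x = zuSome i a := by
  match x with
  | (none : Option (Σ i, S i)) => exact Or.inl rfl
  | (some ⟨i, a⟩ : Option (Σ i, S i)) => exact Or.inr ⟨i, a, rfl⟩

lemma zuSome_inj {i j : Fin n} {a : S i} {b : S j}
    (h : (zuSome i a : ZeroUnion S) = zuSome j b) : ∃ h : i = j, h ▸ a = b := by
  have : (⟨i, a⟩ : Σ i, S i) = ⟨j, b⟩ := Option.some_injective _ h
  have h1 : i = j := congrArg Sigma.fst this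
  subst h1
  exact ⟨rfl, sigma_mk_injective this⟩

lemma zuSome_ne_zero (i : Fin n) (a : S i) : (zuSome i a : ZeroUnion S) ≠ zuZero := by
  exact fun h => Option.some_ne_none _ h

lemma zu_mul_same (i : Fin n) (a b : S i) :
    (zuSome i a : ZeroUnion S) * zuSome i b = zuSome i (a * b) := by
  show (if h : i = i then (zuSome i (a * (h ▸ b)) : ZeroUnion S) else zuZero) = _
  rw [dif_pos rfl]

lemma zu_mul_ne {i j : Fin n} (h : j ≠ i) (a : S i) (b : S j) :
    (zuSome i a : ZeroUnion S) * zuSome j b = zuZero := by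
  show (if h : j = i then (zuSome i (a * (h ▸ b)) : ZeroUnion S) else zuZero) = _
  rw [dif_neg h]

lemma zu_zero_mul (x : ZeroUnion S) : (zuZero : ZeroUnion S) * x = zuZero := rfl

lemma zu_mul_zero (x : ZeroUnion S) : x * (zuZero : ZeroUnion S) = zuZero := by
  rcases zu_cases x with rfl | ⟨i, a, rfl⟩ <;> rfl

end Helpers

section Center
variable {n : ℕ} {S : Fin n → Type*} [∀ i, Mul (S i)]

lemma zu_zero_center : (zuZero : ZeroUnion S) ∈ sgCenter (ZeroUnion S) := by
  intro y
  rw [zu_zero_mul, zu_mul_zero]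

lemma zu_some_center_iff (i : Fin n) (a : S i) :
    (zuSome i a : ZeroUnion S) ∈ sgCenter (ZeroUnion S) ↔ a ∈ sgCenter (S i) := by
  constructor
  · intro h b
    have := h (zuSome i b)
    rw [zu_mul_same, zu_mul_same] at this
    obtain ⟨_, h2⟩ := zuSome_inj this
    simpa using h2
  · intro h y
    rcases zu_cases y with rfl | ⟨j, b, rfl⟩
    · rw [zu_zero_mul, zu_mul_zero]
    · rcases eq_or_ne j i with rfl | hji
      · rw [zu_mul_same, zu_mul_same, h b]
      · rw [zu_mul_ne hji, zu_mul_ne hji.symm]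

lemma exists_noncentral (i : Fin n) (h : ¬ ∀ x y : S i, x * y = y * x) :
    ∃ x : S i, x ∉ sgCenter (S i) := by
  by_contra hc
  push_neg at hc
  exact h fun x y => hc x y

end Center

section Main
variable {n : ℕ} {S : Fin n → Type*} [∀ i, Mul (S i)]

lemma zuSome_ne_idx {i j : Fin n} (hij : i ≠ j) (a : S i) (b : S j) :
    (zuSome i a : ZeroUnion S) ≠ zuSome j b := by
  intro h
  obtain ⟨h1, -⟩ := zuSome_inj h
  exact hij h1

lemma zuSome_inj_same {i : Fin n} {a b : S i}
    (h : (zuSome i a : ZeroUnion S) = zuSome i b) : a = b := by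
  obtain ⟨h1, h2⟩ := zuSome_inj h
  simpa using h2

/-- vertex of the commuting graph of the zero union -/
def zuVert (i : Fin n) (x : S i) (hx : x ∉ sgCenter (S i)) :
    {a : ZeroUnion S // a ∉ sgCenter (ZeroUnion S)} :=
  ⟨zuSome i x, fun h => hx ((zu_some_center_iff i x).mp h)⟩

lemma extract {u v : {x : ZeroUnion S // x ∉ sgCenter (ZeroUnion S)}}
    {p : (commGraph (ZeroUnion S)).Walk u v} (hp : IsLeftPath p) :
    ∃ (i : Fin n) (x y : S i), x ∉ sgCenter (S i) ∧ y ∉ sgCenter (S i) ∧ x ≠ y ∧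
      x * x = y * x ∧ y * y = x * y ∧ u.1 = zuSome i x ∧ v.1 = zuSome i y := by
  obtain ⟨hpath, hne, hsupp⟩ := hp
  rcases zu_cases u.1 with hu | ⟨i, x, hu⟩
  · exact absurd (hu ▸ zu_zero_center) u.2
  rcases zu_cases v.1 with hv | ⟨j, y, hv⟩
  · exact absurd (hv ▸ zu_zero_center) v.2
  have hsu := hsupp u p.start_mem_support
  have hsv := hsupp v p.end_mem_support
  rw [hu, hv] at hsu hsv
  rcases eq_or_ne i j with rfl | hij
  · rw [zu_mul_same, zu_mul_same] at hsu hsv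
    refine ⟨i, x, y, ?_, ?_, ?_, zuSome_inj_same hsu, (zuSome_inj_same hsv).symm, hu, hv⟩
    · exact fun h => u.2 (hu ▸ (zu_some_center_iff i x).mpr h)
    · exact fun h => v.2 (hv ▸ (zu_some_center_iff i y).mpr h)
    · intro h
      exact hne (Subtype.ext (by rw [hu, hv, h]))
  · rw [zu_mul_same, zu_mul_ne hij] at hsu
    exact absurd hsu (zuSome_ne_zero _ _)

lemma construct1 (i : Fin n) (x y : S i)
    (hx : x ∉ sgCenter (S i)) (hy : y ∉ sgCenter (S i)) (hxy : x ≠ y)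
    (e1 : x * x = y * x) (e2 : y * y = x * y) (hc : x * y = y * x) :
    ∃ (u v : {a : ZeroUnion S // a ∉ sgCenter (ZeroUnion S)}) (p : (commGraph (ZeroUnion S)).Walk u v), IsLeftPath p ∧ p.length = 1 := by
  set u := zuVert i x hx with hu
  set v := zuVert i y hy with hv
  have hne : u ≠ v := fun h => hxy (zuSome_inj_same (congrArg Subtype.val h))
  have adj : (commGraph (ZeroUnion S)).Adj u v :=
    ⟨hne, by { show zuSome i x * zuSome i y = zuSome i y * zuSome i x;
               rw [zu_mul_same, zu_mul_same, hc] }⟩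
  refine ⟨u, v, Walk.cons adj Walk.nil, ⟨?_, hne, ?_⟩, rfl⟩
  · rw [Walk.cons_isPath_iff]
    exact ⟨Walk.IsPath.nil, by simp [hne]⟩
  · intro w hw
    simp [Walk.support_cons, Walk.support_nil] at hw
    rcases hw with rfl | rfl
    · show zuSome i x * zuSome i x = zuSome i y * zuSome i x
      rw [zu_mul_same, zu_mul_same, e1]
    · show zuSome i x * zuSome i y = zuSome i y * zuSome i y
      rw [zu_mul_same, zu_mul_same, e2]

lemma construct2 (i j : Fin n) (hij : j ≠ i) (x y : S i) (z : S j)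
    (hx : x ∉ sgCenter (S i)) (hy : y ∉ sgCenter (S i)) (hz : z ∉ sgCenter (S j))
    (hxy : x ≠ y) (e1 : x * x = y * x) (e2 : y * y = x * y) :
    ∃ (u v : {a : ZeroUnion S // a ∉ sgCenter (ZeroUnion S)}) (p : (commGraph (ZeroUnion S)).Walk u v), IsLeftPath p ∧ p.length = 2 := by
  set u := zuVert i x hx with hu
  set v := zuVert i y hy with hv
  set w := zuVert j z hz with hw
  have hne : u ≠ v := fun h => hxy (zuSome_inj_same (congrArg Subtype.val h))
  have huw : u ≠ w := fun h => zuSome_ne_idx hij.symm x z (congrArg Subtype.val h)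
  have hwv : w ≠ v := fun h => zuSome_ne_idx hij z y (congrArg Subtype.val h)
  have a1 : (commGraph (ZeroUnion S)).Adj u w :=
    ⟨huw, by { show zuSome i x * zuSome j z = zuSome j z * zuSome i x;
               rw [zu_mul_ne hij, zu_mul_ne hij.symm] }⟩
  have a2 : (commGraph (ZeroUnion S)).Adj w v :=
    ⟨hwv, by { show zuSome j z * zuSome i y = zuSome i y * zuSome j z;
               rw [zu_mul_ne hij.symm, zu_mul_ne hij] }⟩
  refine ⟨u, v, Walk.cons a1 (Walk.cons a2 Walk.nil), ⟨?_, hne, ?_⟩, rfl⟩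
  · rw [Walk.cons_isPath_iff, Walk.cons_isPath_iff]
    refine ⟨⟨Walk.IsPath.nil, by simp [hwv]⟩, ?_⟩
    simp [Walk.support_cons, Walk.support_nil, huw, hne]
  · intro t ht
    simp [Walk.support_cons, Walk.support_nil] at ht
    rcases ht with rfl | rfl | rfl
    · show zuSome i x * zuSome i x = zuSome i y * zuSome i x
      rw [zu_mul_same, zu_mul_same, e1]
    · show zuSome i x * zuSome j z = zuSome i y * zuSome j z
      rw [zu_mul_ne hij, zu_mul_ne hij]
    · show zuSome i x * zuSome i y = zuSome i y * zuSome i y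
      rw [zu_mul_same, zu_mul_same, e2]

end Main

section Main2
variable {n : ℕ} {S : Fin n → Type*} [∀ i, Mul (S i)]

lemma length_one_down {u v : {x : ZeroUnion S // x ∉ sgCenter (ZeroUnion S)}}
    {p : (commGraph (ZeroUnion S)).Walk u v}
    (hp : IsLeftPath p) (hl : p.length = 1) :
    ∃ (i : Fin n) (u' v' : {x : S i // x ∉ sgCenter (S i)})
      (q : (commGraph (S i)).Walk u' v'), IsLeftPath q ∧ q.length = 1 := by
  obtain ⟨i, x, y, hx, hy, hxy, e1, e2, hu, hv⟩ := extract hp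
  have hadj := p.adj_of_length_eq_one hl
  have hc : x * y = y * x := by
    have h := hadj.2
    rw [hu, hv, zu_mul_same, zu_mul_same] at h
    exact zuSome_inj_same h
  have hne : (⟨x, hx⟩ : {a : S i // a ∉ sgCenter (S i)}) ≠ ⟨y, hy⟩ :=
    fun h => hxy (congrArg Subtype.val h)
  refine ⟨i, ⟨x, hx⟩, ⟨y, hy⟩, Walk.cons (show (commGraph (S i)).Adj ⟨x, hx⟩ ⟨y, hy⟩ from ⟨hne, hc⟩) Walk.nil, ⟨?_, hne, ?_⟩, rfl⟩
  · rw [Walk.cons_isPath_iff]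
    exact ⟨Walk.IsPath.nil, by simp [hne]⟩
  · intro w hw
    simp [Walk.support_cons, Walk.support_nil] at hw
    rcases hw with rfl | rfl
    · exact e1
    · exact e2.symm

lemma length_one_up {i : Fin n} {u' v' : {x : S i // x ∉ sgCenter (S i)}}
    {q : (commGraph (S i)).Walk u' v'} (hq : IsLeftPath q) (hl : q.length = 1) :
    ∃ (u v : {a : ZeroUnion S // a ∉ sgCenter (ZeroUnion S)})
      (p : (commGraph (ZeroUnion S)).Walk u v), IsLeftPath p ∧ p.length = 1 := by
  obtain ⟨hpath, hne, hsupp⟩ := hq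
  have hc : (u' : S i) * v' = (v' : S i) * u' := (q.adj_of_length_eq_one hl).2
  have hxy : (u' : S i) ≠ v' := fun h => hne (Subtype.ext h)
  exact construct1 i u' v' u'.2 v'.2 hxy
    (hsupp u' q.start_mem_support) (hsupp v' q.end_mem_support).symm hc

end Main2

theorem knitDegree_zeroUnion {n : ℕ} (S : Fin n → Type*)
    [∀ i, Semigroup (S i)] [∀ i, Fintype (S i)] [∀ i, Nonempty (S i)]
    (NC : Finset (Fin n)) (hNC : ∀ i, i ∈ NC ↔ ¬ ∀ x y : S i, x * y = y * x)
    (h2 : 2 ≤ NC.card) :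
    (HasLeftPath (ZeroUnion S) ↔
      ∃ i ∈ NC, ∃ x y : S i, x ∉ sgCenter (S i) ∧ y ∉ sgCenter (S i) ∧ x ≠ y ∧
        x * x = y * x ∧ y * y = x * y) ∧
    (HasLeftPath (ZeroUnion S) →
      (knitDegree (ZeroUnion S) = 1 ∨ knitDegree (ZeroUnion S) = 2) ∧
      (knitDegree (ZeroUnion S) = 1 ↔
        ∃ (i : Fin n) (u v : {x : S i // x ∉ sgCenter (S i)})
          (p : (commGraph (S i)).Walk u v), IsLeftPath p ∧ p.length = 1)) := by
  have hfwd : HasLeftPath (ZeroUnion S) →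
      ∃ i ∈ NC, ∃ x y : S i, x ∉ sgCenter (S i) ∧ y ∉ sgCenter (S i) ∧ x ≠ y ∧
        x * x = y * x ∧ y * y = x * y := by
    rintro ⟨u, v, p, hp⟩
    obtain ⟨i, x, y, hx, hy, hxy, e1, e2, -, -⟩ := extract hp
    exact ⟨i, (hNC i).mpr (fun hall => hx (fun b => hall x b)), x, y, hx, hy, hxy, e1, e2⟩
  have hbuild : (∃ i ∈ NC, ∃ x y : S i, x ∉ sgCenter (S i) ∧ y ∉ sgCenter (S i) ∧ x ≠ y ∧
        x * x = y * x ∧ y * y = x * y) →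
      ∃ (u v : {a : ZeroUnion S // a ∉ sgCenter (ZeroUnion S)})
        (p : (commGraph (ZeroUnion S)).Walk u v),
        IsLeftPath p ∧ (p.length = 1 ∨ p.length = 2) := by
    rintro ⟨i, hi, x, y, hx, hy, hxy, e1, e2⟩
    by_cases hc : x * y = y * x
    · obtain ⟨u, v, p, h1, hl⟩ := construct1 i x y hx hy hxy e1 e2 hc
      exact ⟨u, v, p, h1, Or.inl hl⟩
    · obtain ⟨j, hj, hji⟩ := Finset.exists_mem_ne (show 1 < NC.card by omega) i
      obtain ⟨z, hz⟩ := exists_noncentral j ((hNC j).mp hj)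
      obtain ⟨u, v, p, h1, hl⟩ := construct2 i j hji x y z hx hy hz hxy e1 e2
      exact ⟨u, v, p, h1, Or.inr hl⟩
  refine ⟨⟨hfwd, fun h => ?_⟩, fun hL => ?_⟩
  · obtain ⟨u, v, p, h1, -⟩ := hbuild h
    exact ⟨u, v, p, h1⟩
  · set K : Set ℕ := {m | ∃ (u v : {x : ZeroUnion S // x ∉ sgCenter (ZeroUnion S)})
      (p : (commGraph (ZeroUnion S)).Walk u v), IsLeftPath p ∧ p.length = m} with hK
    have hdef : knitDegree (ZeroUnion S) = sInf K := rfl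
    obtain ⟨u, v, p, h1, hlen⟩ := hbuild (hfwd hL)
    have hmemK : p.length ∈ K := ⟨u, v, p, h1, rfl⟩
    have hKne : K.Nonempty := ⟨_, hmemK⟩
    have h0 : 0 ∉ K := by
      rintro ⟨u', v', q, hq, hq0⟩
      exact hq.2.1 (Walk.eq_of_length_eq_zero hq0)
    have hinf_mem : sInf K ∈ K := Nat.sInf_mem hKne
    have h1le : 1 ≤ sInf K := by
      rcases Nat.eq_zero_or_pos (sInf K) with h | h
      · exact absurd (h ▸ hinf_mem) h0
      · exact h
    have hle2 : sInf K ≤ 2 := le_trans (Nat.sInf_le hmemK) (by omega)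
    rw [hdef]
    refine ⟨by omega, ?_⟩
    constructor
    · intro hk1
      rw [hk1] at hinf_mem
      obtain ⟨u', v', q, hq, hql⟩ := hinf_mem
      exact length_one_down hq hql
    · rintro ⟨i, u', v', q, hq, hql⟩
      obtain ⟨u'', v'', p'', hp'', hpl⟩ := length_one_up hq hql
      have hm1 : 1 ∈ K := ⟨u'', v'', p'', hp'', hpl⟩
      have := Nat.sInf_le hm1
      omega
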